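/- Scission for a matrix of generic full rank: Let A ∈ k[[x]]^{n×n} be a matrix of formal power series with det A ≠ 0, and let ℓ : k[[x]]^n → k[[x]]^n be the k[[x]]-linear map z ↦ A·z. Then there exists a k-linear map σ : k[[x]]^n → k[[x]]^n which is a scission of ℓ, i.e. ℓ∘σ∘ℓ = ℓ, and which satisfies ord(σ(z) − σ(w)) ≥ ord(z − w) − ord(det A) for all z, w ∈ k[[x]]^n. -/

import Mathlib

/- Scission for a matrix of generic full rank. -/

noncomputable section

open MvPowerSeries

/-- The order of a vector of power series: the minimum of the orders of the components. -/
def ordV {k : Type} [Field k] {n m : ℕ} (c : Fin m → MvPowerSeries (Fin n) k) : ℕ∞ :=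
  ⨅ i, MvPowerSeries.order (c i)

namespace ScissionAux

variable {k : Type} [Field k] {n : ℕ}

lemma degree_add (a b : Fin n →₀ ℕ) : (a + b).degree = a.degree + b.degree := by
  simp [Finsupp.degree_eq_weight_one, map_add]

variable (ψ : MvPowerSeries (Fin n) k →ₗ[k] MvPowerSeries (Fin n) k)
  (d : MvPowerSeries (Fin n) k) (e : ℕ)

/-- partial sums of the division algorithm -/
def sa (f : MvPowerSeries (Fin n) k) : ℕ → MvPowerSeries (Fin n) k
  | 0 => 0
  | j+1 => sa f j + homogeneousComponent j (ψ (homogeneousComponent (j+e) (f - d * sa f j)))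

def ga (f : MvPowerSeries (Fin n) k) (j : ℕ) : MvPowerSeries (Fin n) k :=
  homogeneousComponent j (ψ (homogeneousComponent (j+e) (f - d * sa ψ d e f j)))

lemma sa_succ (f : MvPowerSeries (Fin n) k) (j : ℕ) :
    sa ψ d e f (j+1) = sa ψ d e f j + ga ψ d e f j := rfl

lemma ga_def (f : MvPowerSeries (Fin n) k) (j : ℕ) :
    ga ψ d e f j
      = homogeneousComponent j (ψ (homogeneousComponent (j+e) (f - d * sa ψ d e f j))) := rfl

def delta (f : MvPowerSeries (Fin n) k) : MvPowerSeries (Fin n) k :=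
  fun m => coeff m (ga ψ d e f m.degree)

lemma coeff_delta (f : MvPowerSeries (Fin n) k) (m : Fin n →₀ ℕ) :
    coeff m (delta ψ d e f) = coeff m (ga ψ d e f m.degree) := rfl

lemma sa_add (f g : MvPowerSeries (Fin n) k) (j : ℕ) :
    sa ψ d e (f + g) j = sa ψ d e f j + sa ψ d e g j := by
  induction j with
  | zero => simp [sa]
  | succ j ih =>
    rw [sa_succ, sa_succ, sa_succ, ih, ga_def, ga_def, ga_def, ih]
    rw [show f + g - d * (sa ψ d e f j + sa ψ d e g j)
        = (f - d * sa ψ d e f j) + (g - d * sa ψ d e g j) by ring]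
    rw [map_add, map_add, map_add]
    abel

lemma sa_smul (c : k) (f : MvPowerSeries (Fin n) k) (j : ℕ) :
    sa ψ d e (c • f) j = c • sa ψ d e f j := by
  induction j with
  | zero => simp [sa]
  | succ j ih =>
    rw [sa_succ, sa_succ, ga_def, ga_def, ih]
    rw [show c • f - d * (c • sa ψ d e f j) = c • (f - d * sa ψ d e f j) by
      rw [smul_sub, mul_smul_comm]]
    rw [LinearMap.map_smul_of_tower, map_smul, LinearMap.map_smul_of_tower, smul_add]

lemma ga_add (f g : MvPowerSeries (Fin n) k) (j : ℕ) :
    ga ψ d e (f + g) j = ga ψ d e f j + ga ψ d e g j := by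
  rw [ga_def, ga_def, ga_def, sa_add]
  rw [show f + g - d * (sa ψ d e f j + sa ψ d e g j)
      = (f - d * sa ψ d e f j) + (g - d * sa ψ d e g j) by ring]
  rw [map_add, map_add, map_add]

lemma ga_smul (c : k) (f : MvPowerSeries (Fin n) k) (j : ℕ) :
    ga ψ d e (c • f) j = c • ga ψ d e f j := by
  rw [ga_def, ga_def, sa_smul]
  rw [show c • f - d * (c • sa ψ d e f j) = c • (f - d * sa ψ d e f j) by
    rw [smul_sub, mul_smul_comm]]
  rw [LinearMap.map_smul_of_tower, map_smul, LinearMap.map_smul_of_tower]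

/-- `delta` as a `k`-linear map. -/
def deltaL : MvPowerSeries (Fin n) k →ₗ[k] MvPowerSeries (Fin n) k where
  toFun := delta ψ d e
  map_add' f g := by
    apply MvPowerSeries.ext; intro m
    rw [map_add, coeff_delta, coeff_delta, coeff_delta, ga_add, map_add]
  map_smul' c f := by
    apply MvPowerSeries.ext; intro m
    rw [RingHom.id_apply, map_smul, coeff_delta, coeff_delta, ga_smul, map_smul]

lemma homogeneousComponent_idem (g : MvPowerSeries (Fin n) k) (j : ℕ) :
    homogeneousComponent j (homogeneousComponent j g) = homogeneousComponent j g := by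
  apply MvPowerSeries.ext; intro m
  simp only [coeff_homogeneousComponent]
  split_ifs <;> simp

lemma key (hd : ∀ m : Fin n →₀ ℕ, m.degree < e → coeff m d = 0)
    (g : MvPowerSeries (Fin n) k) (j : ℕ) :
    homogeneousComponent (j+e) (d * (g - ∑ i ∈ Finset.range j, homogeneousComponent i g))
      = homogeneousComponent e d * homogeneousComponent j g := by
  apply MvPowerSeries.ext; intro m
  have htail : ∀ q : Fin n →₀ ℕ,
      coeff q (g - ∑ i ∈ Finset.range j, homogeneousComponent i g)
        = if q.degree < j then 0 else coeff q g := by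
    intro q
    rw [map_sub, map_sum]
    simp only [coeff_homogeneousComponent]
    rw [Finset.sum_ite_eq (Finset.range j) q.degree (fun _ => coeff q g)]
    simp only [Finset.mem_range]
    split_ifs <;> simp
  rw [coeff_homogeneousComponent, coeff_mul]
  by_cases hm : m.degree = j + e
  · rw [if_pos hm, coeff_mul]
    apply Finset.sum_congr rfl
    intro pq hpq
    rw [Finset.HasAntidiagonal.mem_antidiagonal] at hpq
    have hdeg : pq.1.degree + pq.2.degree = j + e := by rw [← degree_add, hpq, hm]
    rw [htail, coeff_homogeneousComponent, coeff_homogeneousComponent]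
    by_cases hq : pq.2.degree < j
    · rw [if_pos hq, if_neg (show ¬pq.2.degree = j by omega)]; simp
    · by_cases hp : pq.1.degree = e
      · rw [if_neg hq, if_pos hp, if_pos (by omega)]
      · rw [hd pq.1 (by omega), if_neg hp]; simp
  · rw [if_neg hm, coeff_mul]
    symm
    apply Finset.sum_eq_zero
    intro pq hpq
    rw [Finset.HasAntidiagonal.mem_antidiagonal] at hpq
    have hdeg : pq.1.degree + pq.2.degree = m.degree := by rw [← degree_add, hpq]
    rw [coeff_homogeneousComponent, coeff_homogeneousComponent]
    by_cases hp : pq.1.degree = e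
    · by_cases hq : pq.2.degree = j
      · omega
      · rw [if_neg hq]; simp
    · rw [if_neg hp]; simp

variable {ψ d e} in
lemma sa_dmul (hψ : ∀ x, ψ (homogeneousComponent e d * x) = x)
    (hd : ∀ m : Fin n →₀ ℕ, m.degree < e → coeff m d = 0)
    (g : MvPowerSeries (Fin n) k) (j : ℕ) :
    sa ψ d e (d * g) j = ∑ i ∈ Finset.range j, homogeneousComponent i g := by
  induction j with
  | zero => simp [sa]
  | succ j ih =>
    rw [Finset.sum_range_succ, sa_succ, ih, ga_def, ih, ← mul_sub, key d e hd g j, hψ,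
      homogeneousComponent_idem]

variable {ψ d e} in
lemma delta_dmul (hψ : ∀ x, ψ (homogeneousComponent e d * x) = x)
    (hd : ∀ m : Fin n →₀ ℕ, m.degree < e → coeff m d = 0)
    (g : MvPowerSeries (Fin n) k) :
    delta ψ d e (d * g) = g := by
  apply MvPowerSeries.ext; intro m
  rw [coeff_delta, ga_def, sa_dmul hψ hd, ← mul_sub, key d e hd g m.degree, hψ,
    homogeneousComponent_idem, coeff_homogeneousComponent, if_pos rfl]

variable {ψ d e} in
lemma sa_vanish {t : ℕ} {f : MvPowerSeries (Fin n) k}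
    (hf : ∀ m : Fin n →₀ ℕ, m.degree < t → coeff m f = 0) (j : ℕ) (h : j + e ≤ t) :
    sa ψ d e f j = 0 := by
  induction j with
  | zero => rfl
  | succ j ih =>
    rw [sa_succ, ih (by omega), ga_def, ih (by omega), mul_zero, sub_zero]
    have : homogeneousComponent (j + e) f = 0 := by
      apply MvPowerSeries.ext; intro m
      rw [coeff_homogeneousComponent, map_zero]
      split_ifs with hme
      · exact hf m (by omega)
      · rfl
    rw [this, map_zero, map_zero, add_zero]

variable {ψ d e} in
lemma delta_vanish {t : ℕ} {f : MvPowerSeries (Fin n) k}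
    (hf : ∀ m : Fin n →₀ ℕ, m.degree < t → coeff m f = 0) (m : Fin n →₀ ℕ)
    (h : m.degree + e < t) :
    coeff m (delta ψ d e f) = 0 := by
  rw [coeff_delta, ga_def, sa_vanish hf _ (by omega), mul_zero, sub_zero]
  have : homogeneousComponent (m.degree + e) f = 0 := by
    apply MvPowerSeries.ext; intro q
    rw [coeff_homogeneousComponent, map_zero]
    split_ifs with hq
    · exact hf q (by omega)
    · rfl
  rw [this, map_zero, map_zero, map_zero]

variable {ψ d e} in
lemma order_le_delta (f : MvPowerSeries (Fin n) k) :
    f.order ≤ (delta ψ d e f).order + e := by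
  rcases eq_or_ne (delta ψ d e f).order ⊤ with h | h
  · rw [h, top_add]; exact le_top
  · obtain ⟨o, ho⟩ : ∃ o : ℕ, (delta ψ d e f).order = o := ⟨_, (ENat.coe_toNat h).symm⟩
    rw [ho]
    by_contra hcon
    push_neg at hcon
    have hlt : ((o + e : ℕ) : ℕ∞) < f.order := by
      refine lt_of_eq_of_lt ?_ hcon
      push_cast; rfl
    have hf : ∀ m : Fin n →₀ ℕ, m.degree < o + e + 1 → coeff m f = 0 := by
      intro m hm
      apply coeff_of_lt_order
      refine lt_of_le_of_lt ?_ hlt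
      exact_mod_cast Nat.lt_succ_iff.mp hm
    have hle : ((o + 1 : ℕ) : ℕ∞) ≤ (delta ψ d e f).order := by
      apply nat_le_order
      intro m hm
      exact delta_vanish hf m (by omega)
    rw [ho] at hle
    have : o + 1 ≤ o := by exact_mod_cast hle
    omega

/-- Scalar scission with order control. -/
theorem exists_delta (d : MvPowerSeries (Fin n) k) (hd0 : d ≠ 0) :
    ∃ δ : MvPowerSeries (Fin n) k →ₗ[k] MvPowerSeries (Fin n) k,
      (∀ g, δ (d * g) = g) ∧ (∀ f, f.order ≤ (δ f).order + d.order) := by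
  have hfin : d.order.toNat = d.order := by
    rw [ENat.coe_toNat]
    simpa using hd0
  set e : ℕ := d.order.toNat with he'
  have he : d.order = (e : ℕ∞) := hfin.symm
  have hd : ∀ m : Fin n →₀ ℕ, m.degree < e → coeff m d = 0 := by
    intro m hm
    apply coeff_of_lt_order
    rw [he]; exact_mod_cast hm
  have hne : homogeneousComponent e d ≠ 0 := by
    obtain ⟨m, hm1, hm2⟩ := exists_coeff_ne_zero_and_order (f := d) hfin
    have hmd : m.degree = e := by
      have := hm2.trans he
      exact_mod_cast this
    intro hzero
    apply hm1
    have := congrArg (coeff m) hzero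
    rw [coeff_homogeneousComponent, if_pos hmd, map_zero] at this
    exact this
  set μ : MvPowerSeries (Fin n) k →ₗ[k] MvPowerSeries (Fin n) k :=
    LinearMap.mulLeft k (homogeneousComponent e d) with hμ
  have hker : LinearMap.ker μ = ⊥ := by
    rw [LinearMap.ker_eq_bot]
    intro x y hxy
    simp only [hμ, LinearMap.mulLeft_apply] at hxy
    exact mul_left_cancel₀ hne hxy
  obtain ⟨ψ, hψ0⟩ := μ.exists_leftInverse_of_injective hker
  have hψ : ∀ x, ψ (homogeneousComponent e d * x) = x := by
    intro x
    have := LinearMap.congr_fun hψ0 x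
    simpa [hμ, LinearMap.mulLeft_apply] using this
  refine ⟨deltaL ψ d e, fun g => delta_dmul hψ hd g, fun f => ?_⟩
  rw [he]
  exact order_le_delta f

end ScissionAux


/-- **Scission for a matrix of generic full rank.**
Let `A ∈ k[[x]]^{n×n}` with `det A ≠ 0` and let `ℓ : z ↦ A·z`. Then there is a `k`-linear
scission `σ` of `ℓ` (i.e. `ℓ∘σ∘ℓ = ℓ`) with
`ord(σ z − σ w) ≥ ord(z − w) − ord(det A)` for all `z, w`. -/
theorem scission_generic_full_rank
    {k : Type} [Field k] [CharZero k] {n : ℕ}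
    (A : Matrix (Fin n) (Fin n) (MvPowerSeries (Fin n) k))
    (hdet : A.det ≠ 0) :
    ∃ σ : (Fin n → MvPowerSeries (Fin n) k) →ₗ[k] (Fin n → MvPowerSeries (Fin n) k),
      (∀ z, A.mulVec (σ (A.mulVec z)) = A.mulVec z) ∧
      (∀ z w, ordV (z - w) ≤ ordV (σ z - σ w) + MvPowerSeries.order A.det) := by
  obtain ⟨δ, hδ1, hδ2⟩ := ScissionAux.exists_delta A.det hdet
  set σf : (Fin n → MvPowerSeries (Fin n) k) →ₗ[k] (Fin n → MvPowerSeries (Fin n) k) :=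
    (LinearMap.pi fun i => δ ∘ₗ LinearMap.proj i).comp
      ((Matrix.mulVecLin A.adjugate).restrictScalars k) with hσf
  have happ : ∀ z i, σf z i = δ (A.adjugate.mulVec z i) := fun z i => rfl
  have hsig : ∀ z, σf (A.mulVec z) = z := by
    intro z; funext i
    rw [happ, Matrix.mulVec_mulVec, Matrix.adjugate_mul, Matrix.smul_mulVec,
      Matrix.one_mulVec]
    have hz : (A.det • z) i = A.det * z i := rfl
    rw [hz, hδ1]
  refine ⟨σf, fun z => by rw [hsig], fun z w => ?_⟩
  rw [← map_sub]
  set u := z - w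
  rcases isEmpty_or_nonempty (Fin n) with hn | hn
  · have h1 : ordV u = ⊤ := by simp [ordV]
    have h2 : ordV (σf u) = ⊤ := by simp [ordV]
    rw [h1, h2, top_add]
  · have h1 : ∀ i, ordV u ≤ (A.adjugate.mulVec u i).order := by
      intro i
      apply MvPowerSeries.le_order
      intro m hm
      have he : A.adjugate.mulVec u i = ∑ j, A.adjugate i j * u j := rfl
      rw [he, map_sum]
      apply Finset.sum_eq_zero
      intro j _
      apply coeff_of_lt_order
      calc (m.degree : ℕ∞) < ordV u := hm
        _ ≤ (u j).order := iInf_le _ j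
        _ ≤ (A.adjugate i j).order + (u j).order := le_add_self
        _ ≤ (A.adjugate i j * u j).order := le_order_mul
    have h2 : ∀ i, ordV u ≤ (σf u i).order + A.det.order := by
      intro i
      calc ordV u ≤ (A.adjugate.mulVec u i).order := h1 i
        _ ≤ (δ (A.adjugate.mulVec u i)).order + A.det.order := hδ2 _
        _ = (σf u i).order + A.det.order := by rw [happ]
    obtain ⟨i0, hi0⟩ := Finite.exists_min fun i => (σf u i).order
    have hmin : ordV (σf u) = (σf u i0).order := le_antisymm (iInf_le _ i0) (le_iInf hi0)
    rw [hmin]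
    exact h2 i0
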